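/- Let ρ ∈ ℂ with arg ρ ∈ (0, π/n) for some n ≥ 2, and suppose Re(ρR) = Re(ρR') for two n-th roots of unity R, R'. Then R = R'. -/

import Mathlib

open Complex Real

/-- For ρ with arg ρ ∈ (0, π/n), the map R ↦ Re(ρR) is injective
on the n-th roots of unity. -/
theorem re_rho_mul_injective_on_roots
    (n : ℕ) (hn : 2 ≤ n) (ρ : ℂ) (harg : ρ.arg ∈ Set.Ioo 0 (π / n))
    (R R' : ℂ) (hR : R ^ n = 1) (hR' : R' ^ n = 1)
    (hre : (ρ * R).re = (ρ * R').re) : R = R' := by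
  obtain ⟨hθ0, hθ1⟩ := harg
  have hn0 : n ≠ 0 := by omega
  have hρ0 : ρ ≠ 0 := by
    intro h; rw [h] at hθ0; simp [Complex.arg_zero] at hθ0
  have hRne : R ≠ 0 := fun h => by simp [h, zero_pow hn0] at hR
  have hR'ne : R' ≠ 0 := fun h => by simp [h, zero_pow hn0] at hR'
  have hRabs : ‖R‖ = 1 := Complex.norm_eq_one_of_pow_eq_one hR hn0
  have hR'abs : ‖R'‖ = 1 := Complex.norm_eq_one_of_pow_eq_one hR' hn0
  have hconjR : (starRingEnd ℂ) R = R⁻¹ := (Complex.inv_eq_conj hRabs).symm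
  have hconjR' : (starRingEnd ℂ) R' = R'⁻¹ := (Complex.inv_eq_conj hR'abs).symm
  -- turn re-equality into complex equality using add_conj
  have h1 : ρ * R + (starRingEnd ℂ) ρ * R⁻¹ = ρ * R' + (starRingEnd ℂ) ρ * R'⁻¹ := by
    have := Complex.add_conj (ρ * R)
    have h2 := Complex.add_conj (ρ * R')
    rw [map_mul, hconjR] at this
    rw [map_mul, hconjR'] at h2
    rw [this, h2, hre]
  by_contra hne
  have hkey : ρ * (R * R') = (starRingEnd ℂ) ρ := by
    have hfact : (R - R') * (ρ * (R * R') - (starRingEnd ℂ) ρ) = 0 := by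
      field_simp at h1
      linear_combination h1
    rcases mul_eq_zero.mp hfact with h | h
    · exact absurd (sub_eq_zero.mp h) hne
    · exact sub_eq_zero.mp h
  have hRR' : R * R' = (starRingEnd ℂ) ρ / ρ := by
    field_simp at hkey ⊢
    linear_combination hkey
  -- express conj ρ / ρ as exponential
  set θ := ρ.arg with hθ
  have hρe : (↑‖ρ‖ : ℂ) * Complex.exp (θ * Complex.I) = ρ :=
    Complex.norm_mul_exp_arg_mul_I ρ
  have habsρ : (‖ρ‖ : ℂ) ≠ 0 := by
    simpa using hρ0
  have hratio : (starRingEnd ℂ) ρ / ρ = Complex.exp (-(2 * θ) * Complex.I) := by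
    rw [← hρe, map_mul]
    rw [Complex.conj_ofReal]
    rw [← Complex.exp_conj]
    have : (starRingEnd ℂ) (↑θ * Complex.I) = -(↑θ * Complex.I) := by
      simp [Complex.conj_ofReal]
    rw [this]
    rw [mul_div_mul_left _ _ habsρ, ← Complex.exp_sub]
    ring_nf
  have hpow : Complex.exp (-(2 * θ) * Complex.I) ^ n = 1 := by
    rw [← hratio, ← hRR', mul_pow, hR, hR', one_mul]
  rw [← Complex.exp_nat_mul, Complex.exp_eq_one_iff] at hpow
  obtain ⟨k, hk⟩ := hpow
  have hI : (Complex.I : ℂ) ≠ 0 := Complex.I_ne_zero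
  have hk' : ((n : ℂ) * (-(2 * θ))) = k * (2 * π) := by
    apply mul_right_cancel₀ hI
    rw [mul_assoc] at hk
    linear_combination hk
  have hk'' : (n : ℝ) * (-(2 * θ)) = k * (2 * π) := by
    exact_mod_cast hk'
  have hnθ : (n : ℝ) * θ = -k * π := by linarith
  have hnpos : (0 : ℝ) < n := by positivity
  have h0 : 0 < (n : ℝ) * θ := by positivity
  have h1' : (n : ℝ) * θ < π := by
    have := (mul_lt_mul_iff_right₀ hnpos).mpr hθ1
    rwa [mul_div_cancel₀ _ (ne_of_gt hnpos)] at this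
  have hπ : (0 : ℝ) < π := Real.pi_pos
  rw [hnθ] at h0 h1'
  have hk0 : (0 : ℝ) < -k := by
    by_contra h
    push_neg at h
    nlinarith
  have hk1 : (-k : ℝ) < 1 := by
    by_contra h
    push_neg at h
    nlinarith
  have : (0 : ℤ) < -k ∧ (-k : ℤ) < 1 := by
    constructor <;> [exact_mod_cast hk0; exact_mod_cast hk1]
  omega
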